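/- Let l : ℝ^p → ℝ be differentiable and let L, S ⊆ {1,…,p} be disjoint sets. If l is m-strongly concave on Ω_{|L|+|S|} with m > 0, then 0 ≤ l(β^{(L∪S)}) − l(β^{(L)}) ≤ (1/(2m)) · ‖(∇l(β^{(L)}))_S‖₂², where (∇l(β^{(L)}))_S is the gradient restricted to the coordinates in S (note that by first-order optimality of β^{(L)} the gradient coordinates in L vanish). -/

import Mathlib

open Finset

noncomputable section

/-- Number of nonzero coordinates (the "ℓ₀ norm") of a vector. -/
def spar {p : ℕ} (v : Fin p → ℝ) : ℕ := (Finset.univ.filter fun i => v i ≠ 0).card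

/-- Support of a vector, as a `Finset`. -/
def suppF {p : ℕ} (v : Fin p → ℝ) : Finset (Fin p) :=
  Finset.univ.filter fun i => v i ≠ 0

/-- `Ω_k`: pairs of `k`-sparse vectors differing in at most `k` coordinates. -/
def Omega {p : ℕ} (k : ℕ) : Set ((Fin p → ℝ) × (Fin p → ℝ)) :=
  {q | spar q.1 ≤ k ∧ spar q.2 ≤ k ∧ spar (q.1 - q.2) ≤ k}

/-- `Ω̃_k`: pairs of `k`-sparse vectors differing in at most one coordinate. -/
def OmegaT {p : ℕ} (k : ℕ) : Set ((Fin p → ℝ) × (Fin p → ℝ)) :=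
  {q | spar q.1 ≤ k ∧ spar q.2 ≤ k ∧ spar (q.1 - q.2) ≤ 1}

/-- `l` is `m`-strongly concave on `Ω`. -/
def RStrongConcaveOn {p : ℕ} (l : (Fin p → ℝ) → ℝ) (m : ℝ)
    (Ω : Set ((Fin p → ℝ) × (Fin p → ℝ))) : Prop :=
  ∀ x y : Fin p → ℝ, (x, y) ∈ Ω →
    l y - l x - fderiv ℝ l x (y - x) ≤ -(m / 2) * ∑ i, (y i - x i) ^ 2

/-- `l` is `M`-smooth on `Ω`. -/
def RSmoothOn {p : ℕ} (l : (Fin p → ℝ) → ℝ) (M : ℝ)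
    (Ω : Set ((Fin p → ℝ) × (Fin p → ℝ))) : Prop :=
  ∀ x y : Fin p → ℝ, (x, y) ∈ Ω →
    -(M / 2) * ∑ i, (y i - x i) ^ 2 ≤ l y - l x - fderiv ℝ l x (y - x)

/-- upper bound on the gain from adding a set, via strong concavity. -/
theorem gain_upper_bound_of_strong_concavity
    (p : ℕ) (l : (Fin p → ℝ) → ℝ) (hl : Differentiable ℝ l)
    (β : Finset (Fin p) → (Fin p → ℝ))
    (hβsupp : ∀ S : Finset (Fin p), suppF (β S) ⊆ S)
    (hβmax : ∀ S : Finset (Fin p), ∀ v : Fin p → ℝ, suppF v ⊆ S → l v ≤ l (β S))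
    (L S : Finset (Fin p)) (hLS : Disjoint L S)
    (m : ℝ) (hm : 0 < m)
    (hconc : RStrongConcaveOn l m (Omega (L.card + S.card))) :
    0 ≤ l (β (L ∪ S)) - l (β L) ∧
      l (β (L ∪ S)) - l (β L) ≤
        1 / (2 * m) * ∑ j ∈ S, (fderiv ℝ l (β L) (Pi.single j 1)) ^ 2 := by
  classical
  set x := β L with hx
  set y := β (L ∪ S) with hy
  set g : (Fin p → ℝ) →L[ℝ] ℝ := fderiv ℝ l x with hg
  -- gradient coordinates in L vanish
  have hgL : ∀ j ∈ L, g (Pi.single j 1) = 0 := by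
    intro j hj
    have hmax : IsMaxOn (fun t : ℝ => l (x + t • (Pi.single j 1 : Fin p → ℝ))) Set.univ 0 := by
      intro t _
      show l (x + t • (Pi.single j 1 : Fin p → ℝ)) ≤ l (x + (0:ℝ) • (Pi.single j 1 : Fin p → ℝ))
      rw [zero_smul, add_zero]
      apply hβmax L
      intro i hi
      simp only [suppF, Finset.mem_filter, Finset.mem_univ, true_and] at hi
      by_cases hij : i = j
      · exact hij ▸ hj
      · apply hβsupp L
        simp only [suppF, Finset.mem_filter, Finset.mem_univ, true_and]
        intro h0
        apply hi
        simp only [Pi.add_apply, Pi.smul_apply, Pi.single_apply, hij, if_false,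
          smul_zero, add_zero]
        exact h0
    have hderiv : HasDerivAt (fun t : ℝ => l (x + t • (Pi.single j 1 : Fin p → ℝ)))
        (g (Pi.single j 1)) 0 := by
      have hc : HasDerivAt (fun t : ℝ => x + t • (Pi.single j 1 : Fin p → ℝ))
          (Pi.single j 1) 0 := by
        have : HasDerivAt (fun t : ℝ => t • (Pi.single j 1 : Fin p → ℝ))
            ((1:ℝ) • (Pi.single j 1 : Fin p → ℝ)) 0 :=
          (hasDerivAt_id (0:ℝ)).smul_const (Pi.single j 1 : Fin p → ℝ)
        simpa using this.const_add x
      have hfd : HasFDerivAt l g (x + (0:ℝ) • (Pi.single j 1 : Fin p → ℝ)) := by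
        simpa using (hl (x)).hasFDerivAt
      exact hfd.comp_hasDerivAt 0 hc
    have := (hmax.isLocalMax (by simp)).deriv_eq_zero
    rwa [hderiv.deriv] at this
  -- supports
  have hsx : suppF x ⊆ L := hβsupp L
  have hsy : suppF y ⊆ L ∪ S := hβsupp (L ∪ S)
  have hspar : ∀ (v : Fin p → ℝ) (T : Finset (Fin p)), suppF v ⊆ T → spar v ≤ T.card := by
    intro v T h
    exact Finset.card_le_card h
  have hsd : suppF (x - y) ⊆ L ∪ S := by
    intro i hi
    simp only [suppF, Finset.mem_filter, Finset.mem_univ, true_and, Pi.sub_apply] at hi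
    by_cases h1 : x i ≠ 0
    · exact Finset.mem_union_left _ (hsx (by simp [suppF, h1]))
    · push_neg at h1
      have : y i ≠ 0 := by intro h; apply hi; rw [h1, h]; ring
      exact hsy (by simp [suppF, this])
  have hcardLS : (L ∪ S).card = L.card + S.card := Finset.card_union_of_disjoint hLS
  have hmem : ((x, y) : (Fin p → ℝ) × (Fin p → ℝ)) ∈ Omega (L.card + S.card) := by
    refine ⟨?_, ?_, ?_⟩
    · exact le_trans (hspar x L hsx) (Nat.le_add_right _ _)
    · exact le_trans (hspar y (L ∪ S) hsy) (le_of_eq hcardLS)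
    · exact le_trans (hspar (x - y) (L ∪ S) hsd) (le_of_eq hcardLS)
  have hconc' := hconc x y hmem
  -- lower bound
  have h0 : 0 ≤ l y - l x := by
    have := hβmax (L ∪ S) x (hsx.trans Finset.subset_union_left)
    linarith
  refine ⟨h0, ?_⟩
  -- expand fderiv as sum
  have hfsum : g (y - x) = ∑ i, (y i - x i) * g (Pi.single i 1) := by
    have hpi : ∀ i : Fin p, (fun j => if i = j then (1:ℝ) else 0) = Pi.single i 1 := by
      intro i; funext k; simp [Pi.single_apply, eq_comm]
    have := LinearMap.pi_apply_eq_sum_univ (g.toLinearMap) (y - x)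
    simp only [ContinuousLinearMap.coe_coe, smul_eq_mul, hpi, Pi.sub_apply] at this
    exact this
  -- pointwise bound
  have hpt : ∀ i : Fin p, (y i - x i) * g (Pi.single i 1) - m / 2 * (y i - x i) ^ 2 ≤
      (if i ∈ S then g (Pi.single i 1) ^ 2 / (2 * m) else 0) := by
    intro i
    by_cases hiS : i ∈ S
    · simp only [hiS, if_true]
      rw [le_div_iff₀ (by linarith : (0:ℝ) < 2 * m)]
      nlinarith [sq_nonneg (g (Pi.single i 1) - m * (y i - x i))]
    · simp only [hiS, if_false]
      by_cases hiL : i ∈ L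
      · rw [hgL i hiL]
        nlinarith [sq_nonneg (y i - x i)]
      · have hxi : x i = 0 := by
          by_contra h; exact hiL (hsx (by simp [suppF, h]))
        have hyi : y i = 0 := by
          by_contra h
          have hmem' : i ∈ suppF y := by
            simp only [suppF, Finset.mem_filter, Finset.mem_univ, true_and]; exact h
          rcases Finset.mem_union.mp (hsy hmem') with h' | h'
          · exact hiL h'
          · exact hiS h'
        rw [hxi, hyi]; norm_num
  have hsum : ∑ i, ((y i - x i) * g (Pi.single i 1) - m / 2 * (y i - x i) ^ 2) ≤
      ∑ j ∈ S, g (Pi.single j 1) ^ 2 / (2 * m) := by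
    calc _ ≤ ∑ i, (if i ∈ S then g (Pi.single i 1) ^ 2 / (2 * m) else 0) :=
          Finset.sum_le_sum (fun i _ => hpt i)
      _ = _ := by rw [Finset.sum_ite_mem, Finset.univ_inter]
  have hexp : l y - l x ≤ ∑ i, ((y i - x i) * g (Pi.single i 1) - m / 2 * (y i - x i) ^ 2) := by
    rw [Finset.sum_sub_distrib, ← hfsum, ← Finset.mul_sum]
    have : -(m / 2) * ∑ i, (y i - x i) ^ 2 = -(m / 2 * ∑ i, (y i - x i) ^ 2) := by ring
    linarith [hconc']
  have : ∑ j ∈ S, g (Pi.single j 1) ^ 2 / (2 * m) =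
      1 / (2 * m) * ∑ j ∈ S, g (Pi.single j 1) ^ 2 := by
    rw [Finset.mul_sum]; exact Finset.sum_congr rfl (fun j _ => by ring)
  linarith [hexp, hsum]
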